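/- Let A, B be bounded positive invertible operators on a complex Hilbert space with c+ε ≤ A ≤ 2c for some positive reals ε < c. If (2tA − t²)^{1/2} ≤ B ≤ A²/(2t) + t/2 for every t in the interval [c+ε, 2c], then A = B. -/

import Mathlib

open scoped InnerProductSpace
set_option synthInstance.maxHeartbeats 1000000
set_option maxHeartbeats 1000000

namespace Stmt9Aux

variable {m M t x : ℝ}

lemma q_nonneg (hm : 0 < m) (hM : M < 2*m) (ht : t ∈ Set.Icc m M) (hx : x ∈ Set.Icc m M) :
    0 ≤ 2*t*x - t^2 := by
  obtain ⟨ht1, ht2⟩ := ht; obtain ⟨hx1, hx2⟩ := hx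
  nlinarith

lemma sqrt_le (hm : 0 < m) (ht : t ∈ Set.Icc m M) (hx : x ∈ Set.Icc m M) :
    Real.sqrt (2*t*x - t^2) ≤ x := by
  obtain ⟨ht1, ht2⟩ := ht; obtain ⟨hx1, hx2⟩ := hx
  have h1 : 2*t*x - t^2 ≤ x^2 := by nlinarith [sq_nonneg (x - t)]
  calc Real.sqrt (2*t*x - t^2) ≤ Real.sqrt (x^2) := Real.sqrt_le_sqrt h1
    _ = x := by rw [Real.sqrt_sq (by linarith)]

lemma le_sqrt (hm : 0 < m) (hM : M < 2*m) (ht : t ∈ Set.Icc m M) (hx : x ∈ Set.Icc m M) :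
    x - (x-t)^2/m ≤ Real.sqrt (2*t*x - t^2) := by
  obtain ⟨ht1, ht2⟩ := ht; obtain ⟨hx1, hx2⟩ := hx
  rcases le_or_gt (x - (x-t)^2/m) 0 with h | h
  · exact h.trans (Real.sqrt_nonneg _)
  · rw [show x - (x-t)^2/m = Real.sqrt ((x - (x-t)^2/m)^2) by rw [Real.sqrt_sq h.le]]
    apply Real.sqrt_le_sqrt
    have hd : (x - t)^2 ≤ (M - m)^2 := by nlinarith
    have he : (x-t)^2/m ≤ (M-m)^2/m := by gcongr
    have he2 : (M-m)^2/m < m := by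
      rw [div_lt_iff₀ hm]; nlinarith
    have hcanc : m * ((x-t)^2/m) = (x-t)^2 := by field_simp
    have key : 0 ≤ ((x-t)^2/m) * (2*x - (x-t)^2/m - m) := by
      apply mul_nonneg (by positivity)
      have : (x-t)^2/m < m := lt_of_le_of_lt he he2
      linarith
    nlinarith [key, hcanc]

lemma upper_bound (hm : 0 < m) (hM : M < 2*m) (ht : t ∈ Set.Icc m M) (hx : x ∈ Set.Icc m M) :
    (1/(2*t))*x^2 + t/2 - Real.sqrt (2*t*x - t^2) ≤ (3/(2*m))*(x-t)^2 := by
  have h1 := le_sqrt hm hM ht hx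
  have ht0 : 0 < t := lt_of_lt_of_le hm ht.1
  have e : (1/(2*t))*x^2 + t/2 - x = (x-t)^2/(2*t) := by field_simp; ring
  have b1 : (x-t)^2/(2*t) ≤ (x-t)^2/(2*m) := by gcongr <;> linarith [ht.1]
  have e2 : (x-t)^2/(2*m) + (x-t)^2/m = (3/(2*m))*(x-t)^2 := by field_simp; ring
  linarith

lemma sq_bound (hx : x ∈ Set.Icc m M) (ht : t ∈ Set.Icc m M) : (x-t)^2 ≤ (M-m)^2 := by
  obtain ⟨ht1, ht2⟩ := ht; obtain ⟨hx1, hx2⟩ := hx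
  nlinarith

lemma u_sq_bound (hm : 0 < m) (hM : M < 2*m) (ht : t ∈ Set.Icc m M) (hx : x ∈ Set.Icc m M) :
    (x - Real.sqrt (2*t*x - t^2))^2 ≤ ((M-m)^2/m^2)*(x-t)^2 := by
  have h1 := le_sqrt hm hM ht hx
  have h2 := sqrt_le hm ht hx
  have hd := sq_bound hx ht
  have hu1 : x - Real.sqrt (2*t*x - t^2) ≤ (x-t)^2/m := by linarith
  have hu0 : 0 ≤ x - Real.sqrt (2*t*x - t^2) := by linarith
  have step : (x - Real.sqrt (2*t*x - t^2))^2 ≤ ((x-t)^2/m)^2 := by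
    apply pow_le_pow_left₀ hu0 hu1
  refine step.trans ?_
  rw [div_pow, div_le_iff₀ (by positivity), mul_assoc]
  have hms : (M-m)^2/m^2*((x-t)^2*m^2) = ((M-m)^2*(x-t)^2)*(m^2/m^2) := by ring
  rw [hms, div_self (by positivity : (m:ℝ)^2 ≠ 0), mul_one]
  nlinarith [sq_nonneg (x-t)]

end Stmt9Aux

namespace Stmt9Aux

variable {H : Type*} [NormedAddCommGroup H] [InnerProductSpace ℂ H] [CompleteSpace H]

lemma inner_le_of_le {T S : H →L[ℂ] H} (h : T ≤ S) (y : H) :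
    RCLike.re ⟪T y, y⟫_ℂ ≤ RCLike.re ⟪S y, y⟫_ℂ := by
  have := (ContinuousLinearMap.le_def T S |>.mp h).inner_nonneg_left y
  simp only [ContinuousLinearMap.reApplyInnerSelf_apply,
    ContinuousLinearMap.sub_apply, inner_sub_left, map_sub] at this
  have := (RCLike.nonneg_iff.mp this).1; rw [map_sub] at this
  linarith

lemma inner_nonneg_of_nonneg {T : H →L[ℂ] H} (h : 0 ≤ T) (y : H) :
    0 ≤ RCLike.re ⟪T y, y⟫_ℂ := by
  have := inner_le_of_le h y
  simpa using this

lemma normsq_eq {T : H →L[ℂ] H} (hT : IsSelfAdjoint T) (y : H) :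
    RCLike.re ⟪(T*T) y, y⟫_ℂ = ‖T y‖ ^ 2 := by
  rw [ContinuousLinearMap.mul_apply]
  nth_rewrite 1 [← hT.adjoint_eq]
  rw [ContinuousLinearMap.adjoint_inner_left]
  exact inner_self_eq_norm_sq _

lemma re_inner_smul (r : ℝ) (T : H →L[ℂ] H) (z : H) :
    RCLike.re ⟪(r • T) z, z⟫_ℂ = r * RCLike.re ⟪T z, z⟫_ℂ := by
  rw [ContinuousLinearMap.smul_apply, RCLike.real_smul_eq_coe_smul (K := ℂ),
    inner_smul_real_left, RCLike.smul_re]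

lemma sq_le_norm_smul {P : H →L[ℂ] H} (hP : 0 ≤ P) : P^2 ≤ ‖P‖ • P := by
  have hsa : IsSelfAdjoint P := .of_nonneg hP
  have halg : P ≤ algebraMap ℝ (H →L[ℂ] H) ‖P‖ :=
    (CStarAlgebra.norm_le_iff_le_algebraMap P (norm_nonneg P) hP).mp le_rfl
  have hspec := (le_algebraMap_iff_spectrum_le (r := ‖P‖) (a := P) hsa).mp halg
  have h0 : ∀ x ∈ spectrum ℝ P, 0 ≤ ‖P‖ * x - x^2 := by
    intro x hx
    have hx0 : 0 ≤ x := spectrum_nonneg_of_nonneg hP hx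
    have hx1 : x ≤ ‖P‖ := hspec x hx
    nlinarith
  have := cfc_nonneg h0
  rw [cfc_sub (fun x : ℝ => ‖P‖ * x) (fun x : ℝ => x^2) P, cfc_const_mul_id ‖P‖ P hsa,
    cfc_pow_id P 2 hsa] at this
  exact sub_nonneg.mp this

lemma le_of_sq_le_sq {a b : ℝ} (ha : 0 ≤ a) (hb : 0 ≤ b) (h : a^2 ≤ b^2) : a ≤ b := by
  nlinarith

lemma cfc_sub_const (A : H →L[ℂ] H) (hA : IsSelfAdjoint A) (t : ℝ) :
    cfc (fun x : ℝ => x - t) A = A - t • 1 := by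
  rw [cfc_sub (fun x : ℝ => x) (fun _ : ℝ => t) A, cfc_id' ℝ A hA, cfc_const t A hA,
    Algebra.algebraMap_eq_smul_one]

end Stmt9Aux

namespace Stmt9Aux

variable {H : Type*} [NormedAddCommGroup H] [InnerProductSpace ℂ H] [CompleteSpace H]

lemma master (A B : H →L[ℂ] H) (hA : IsSelfAdjoint A) {m M : ℝ} (hm : 0 < m) (hM : M < 2*m)
    (hmM : m ≤ M) (hσ : ∀ μ ∈ spectrum ℝ A, μ ∈ Set.Icc m M)
    {t : ℝ} (ht : t ∈ Set.Icc m M)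
    (hLB : cfc (fun x : ℝ => Real.sqrt (2*t*x - t^2)) A ≤ B)
    (hUB : B ≤ cfc (fun x : ℝ => (1/(2*t))*x^2 + t/2) A)
    (y : H) :
    ‖(B - A) y‖ ≤ (3*(M-m)/(2*m) + (M-m)/m) * ‖(A - t • 1) y‖ := by
  set F : ℝ → ℝ := fun x => Real.sqrt (2*t*x - t^2) with hF_def
  set S : H →L[ℂ] H := cfc F A with hS_def
  set C : ℝ := 3/(2*m) with hC_def
  set d : ℝ := M - m with hd_def
  have hC0 : 0 ≤ C := by positivity
  have hd0 : 0 ≤ d := by simp only [hd_def]; linarith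
  have hFcont : ContinuousOn F (spectrum ℝ A) := by fun_prop
  -- the operator A - t•1 and its square
  have hT1sa : IsSelfAdjoint (t • (1 : H →L[ℂ] H)) := by
    rw [← Algebra.algebraMap_eq_smul_one]
    exact IsSelfAdjoint.algebraMap _ (IsSelfAdjoint.all t)
  have hATsa : IsSelfAdjoint (A - t • 1) := hA.sub hT1sa
  have hAT : cfc (fun x : ℝ => x - t) A = A - t • 1 := cfc_sub_const A hA t
  have hAT2 : cfc (fun x : ℝ => (x - t)^2) A = (A - t • 1)^2 := by
    rw [cfc_pow (fun x : ℝ => x - t) 2 A, hAT]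
  -- quadratic form of C • (A - t•1)^2
  have hquad : ∀ z : H, RCLike.re ⟪(cfc (fun x : ℝ => C*(x - t)^2) A) z, z⟫_ℂ
      = C * ‖(A - t • 1) z‖^2 := by
    intro z
    rw [cfc_const_mul C (fun x : ℝ => (x - t)^2) A, hAT2, re_inner_smul, sq (A - t • 1),
      normsq_eq hATsa]
  -- P := B - S
  set P : H →L[ℂ] H := B - S with hP_def
  have hP : 0 ≤ P := sub_nonneg.mpr hLB
  have hPsa : IsSelfAdjoint P := .of_nonneg hP
  have hPle : P ≤ cfc (fun x : ℝ => C*(x - t)^2) A := by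
    have h1 : P ≤ cfc (fun x : ℝ => (1/(2*t))*x^2 + t/2) A - S := sub_le_sub_right hUB S
    have h2 : cfc (fun x : ℝ => (1/(2*t))*x^2 + t/2) A - S
        = cfc (fun x : ℝ => ((1/(2*t))*x^2 + t/2) - F x) A := by
      rw [cfc_sub (fun x : ℝ => (1/(2*t))*x^2 + t/2) F A (by fun_prop) hFcont]
    have h3 : cfc (fun x : ℝ => ((1/(2*t))*x^2 + t/2) - F x) A
        ≤ cfc (fun x : ℝ => C*(x - t)^2) A :=
      cfc_mono (fun x hx => upper_bound hm hM ht (hσ x hx))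
        ((ContinuousOn.add (by fun_prop) (by fun_prop)).sub hFcont) (by fun_prop)
    exact h1.trans (h2.le.trans h3)
  have hPnorm : ‖P‖ ≤ C * d^2 := by
    rw [CStarAlgebra.norm_le_iff_le_algebraMap P (by positivity) hP]
    refine hPle.trans (cfc_le_algebraMap _ _ _ (fun x hx => ?_) (by fun_prop) hA)
    have h2 := sq_bound (hσ x hx) ht
    exact mul_le_mul_of_nonneg_left (by simpa [hd_def] using h2) hC0
  -- bound on ‖P y‖
  have hPy : ‖P y‖ ≤ C * d * ‖(A - t • 1) y‖ := by
    refine le_of_sq_le_sq (norm_nonneg _) (by positivity) ?_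
    have e1 : ‖P y‖^2 = RCLike.re ⟪(P^2) y, y⟫_ℂ := by
      rw [sq P, normsq_eq hPsa]
    have e2 : RCLike.re ⟪(P^2) y, y⟫_ℂ ≤ RCLike.re ⟪(‖P‖ • P) y, y⟫_ℂ :=
      inner_le_of_le (sq_le_norm_smul hP) y
    have e3 : RCLike.re ⟪(‖P‖ • P) y, y⟫_ℂ = ‖P‖ * RCLike.re ⟪P y, y⟫_ℂ := re_inner_smul _ _ _
    have e4 : RCLike.re ⟪P y, y⟫_ℂ ≤ C * ‖(A - t • 1) y‖^2 := by
      rw [← hquad y]; exact inner_le_of_le hPle y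
    have e5 : 0 ≤ RCLike.re ⟪P y, y⟫_ℂ := inner_nonneg_of_nonneg hP y
    have e6 : ‖P‖ * RCLike.re ⟪P y, y⟫_ℂ ≤ (C * d^2) * (C * ‖(A - t • 1) y‖^2) :=
      mul_le_mul hPnorm e4 e5 (by positivity)
    calc ‖P y‖^2 ≤ (C * d^2) * (C * ‖(A - t • 1) y‖^2) := by
          rw [e1]; exact e2.trans (e3.le.trans e6)
      _ = (C * d * ‖(A - t • 1) y‖)^2 := by ring
  -- bound on ‖(A - S) y‖
  have hUle : ∀ z : H, ‖(A - S) z‖ ≤ (d/m) * ‖(A - t • 1) z‖ := by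
    intro z
    refine le_of_sq_le_sq (norm_nonneg _) (by positivity) ?_
    have hASeq : A - S = cfc (fun x : ℝ => x - F x) A := by
      rw [cfc_sub (fun x : ℝ => x) F A (by fun_prop) hFcont, cfc_id' ℝ A hA]
    have hASsa : IsSelfAdjoint (A - S) := by
      rw [hASeq]; exact cfc_predicate _ A
    have e1 : ‖(A - S) z‖^2 = RCLike.re ⟪((A - S)^2) z, z⟫_ℂ := by
      rw [sq (A - S), normsq_eq hASsa]
    have e2 : (A - S)^2 = cfc (fun x : ℝ => (x - F x)^2) A := by
      rw [hASeq, ← cfc_pow (fun x : ℝ => x - F x) 2 A (ContinuousOn.sub (by fun_prop) hFcont)]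
    have e3 : cfc (fun x : ℝ => (x - F x)^2) A
        ≤ cfc (fun x : ℝ => (d^2/m^2) * (x - t)^2) A :=
      cfc_mono (fun x hx => by simpa only [hF_def, hd_def] using u_sq_bound hm hM ht (hσ x hx))
        ((ContinuousOn.sub (by fun_prop) hFcont).pow 2) (by fun_prop)
    have e4 : RCLike.re ⟪(cfc (fun x : ℝ => (d^2/m^2)*(x - t)^2) A) z, z⟫_ℂ
        = (d^2/m^2) * ‖(A - t • 1) z‖^2 := by
      rw [cfc_const_mul (d^2/m^2) (fun x : ℝ => (x - t)^2) A, hAT2, re_inner_smul,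
        sq (A - t • 1), normsq_eq hATsa]
    calc ‖(A - S) z‖^2 = RCLike.re ⟪((A - S)^2) z, z⟫_ℂ := e1
      _ ≤ (d^2/m^2) * ‖(A - t • 1) z‖^2 := by
          rw [e2, ← e4]; exact inner_le_of_le e3 z
      _ = ((d/m) * ‖(A - t • 1) z‖)^2 := by ring
  -- combine
  have hBA : B - A = P - (A - S) := by simp only [hP_def]; abel
  calc ‖(B - A) y‖ = ‖P y - (A - S) y‖ := by
        rw [hBA]; rw [ContinuousLinearMap.sub_apply]
    _ ≤ ‖P y‖ + ‖(A - S) y‖ := norm_sub_le _ _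
    _ ≤ C * d * ‖(A - t • 1) y‖ + (d/m) * ‖(A - t • 1) y‖ := add_le_add hPy (hUle y)
    _ = (C * d + d/m) * ‖(A - t • 1) y‖ := by ring
    _ = (3*(M-m)/(2*m) + (M-m)/m) * ‖(A - t • 1) y‖ := by
        rw [hC_def, hd_def]; ring_nf

end Stmt9Aux

namespace Stmt9Aux

noncomputable def hat (u : ℝ) : ℝ := max 0 (1 - |u|)
lemma hat_nonneg (u : ℝ) : 0 ≤ hat u := le_max_left _ _
lemma hat_le_one (u : ℝ) : hat u ≤ 1 := by
  unfold hat; have := abs_nonneg u; apply max_le <;> linarith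
lemma continuous_hat : Continuous hat := by unfold hat; fun_prop
lemma abs_mul_hat_le (u : ℝ) : |u| * hat u ≤ hat u := by
  rcases le_or_gt 1 (|u|) with h | h
  · have : hat u = 0 := by unfold hat; apply max_eq_left; linarith
    rw [this]; simp
  · exact mul_le_of_le_one_left (hat_nonneg u) h.le

lemma hat_eq_zero {u : ℝ} (h : 1 ≤ |u|) : hat u = 0 := by
  unfold hat
  apply max_eq_left; linarith

lemma hat_sum (n : ℕ) : ∀ u ∈ Set.Icc (0:ℝ) n, ∑ i ∈ Finset.range (n+1), hat (u - i) = 1 := by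
  induction n with
  | zero =>
    intro u hu
    obtain ⟨h1, h2⟩ := hu
    simp only [Nat.cast_zero] at h2
    have : u = 0 := le_antisymm h2 h1
    simp [this, hat]
  | succ n ih =>
    intro u hu
    obtain ⟨h1, h2⟩ := hu
    have h2' : u ≤ (n:ℝ) + 1 := by push_cast at h2; linarith
    rcases le_or_gt u n with hc | hc
    · rw [Finset.sum_range_succ]
      have hz : hat (u - ↑(n+1)) = 0 := by
        apply hat_eq_zero
        rw [abs_sub_comm, abs_of_nonneg (by push_cast; linarith)]
        push_cast; linarith
      rw [hz, add_zero]
      exact ih u ⟨h1, hc⟩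
    · rw [Finset.sum_range_succ, Finset.sum_range_succ]
      have hz : ∑ i ∈ Finset.range n, hat (u - i) = 0 := by
        apply Finset.sum_eq_zero
        intro i hi
        have hi' : (i : ℝ) ≤ (n:ℝ) - 1 := by
          have h3 := Finset.mem_range.mp hi
          have : (i:ℝ) + 1 ≤ n := by exact_mod_cast h3
          linarith
        apply hat_eq_zero
        rw [abs_of_nonneg (by linarith)]
        linarith
      rw [hz, zero_add]
      have e1 : hat (u - n) = 1 - (u - n) := by
        unfold hat
        rw [abs_of_nonneg (by linarith)]
        apply max_eq_right
        linarith
      have e2 : hat (u - ↑(n+1)) = 1 - ((n:ℝ)+1 - u) := by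
        unfold hat
        rw [abs_sub_comm, abs_of_nonneg (by push_cast; linarith)]
        rw [show ((n+1:ℕ):ℝ) = (n:ℝ)+1 by push_cast; ring]
        apply max_eq_right; linarith
      rw [e1, e2]; ring

lemma eta_sq {δ w : ℝ} (hδ : 0 < δ) :
    (δ * w * hat w) * (δ * w * hat w) ≤ δ^2 * hat w := by
  have h1 := abs_mul_hat_le w
  have h2 := hat_nonneg w
  have h3 := hat_le_one w
  have h4 : (|w| * hat w) * (|w| * hat w) ≤ hat w * hat w := by
    apply mul_le_mul h1 h1 (by positivity) h2
  have h5 : hat w * hat w ≤ 1 * hat w := by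
    apply mul_le_mul_of_nonneg_right h3 h2
  have habs : |w| * |w| = w * w := by rw [← abs_mul, abs_mul_self]
  have h6 : (|w| * hat w) * (|w| * hat w) ≤ hat w := h4.trans (by linarith)
  calc (δ * w * hat w) * (δ * w * hat w)
      = δ^2 * ((w * w) * (hat w * hat w)) := by ring
    _ = δ^2 * ((|w| * |w|) * (hat w * hat w)) := by rw [habs]
    _ = δ^2 * ((|w| * hat w) * (|w| * hat w)) := by ring
    _ ≤ δ^2 * hat w := mul_le_mul_of_nonneg_left h6 (sq_nonneg δ)


end Stmt9Aux

open scoped InnerProductSpace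

variable {H : Type*} [NormedAddCommGroup H] [InnerProductSpace ℂ H] [CompleteSpace H]

set_option synthInstance.maxHeartbeats 1000000 in
theorem stmt9 (A B : H →L[ℂ] H) (hA : 0 ≤ A) (hB : 0 ≤ B)
    (hAu : IsUnit A) (hBu : IsUnit B) (c ε : ℝ) (hε : 0 < ε) (hεc : ε < c)
    (hA1 : (c + ε) • (1 : H →L[ℂ] H) ≤ A) (hA2 : A ≤ (2 * c) • (1 : H →L[ℂ] H))
    (h : ∀ t : ℝ, c + ε ≤ t → t ≤ 2 * c →
      CFC.sqrt ((2 * t) • A - t ^ 2 • (1 : H →L[ℂ] H)) ≤ B ∧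
        B ≤ (1 / (2 * t)) • A ^ 2 + (t / 2) • (1 : H →L[ℂ] H)) :
    A = B := by
  classical
  set m : ℝ := c + ε with hm_def
  set M : ℝ := 2 * c with hM_def
  have hm : 0 < m := by simp only [hm_def]; linarith
  have hMlt : M < 2 * m := by simp only [hm_def, hM_def]; linarith
  have hmM : m ≤ M := by simp only [hm_def, hM_def]; linarith
  have hAsa : IsSelfAdjoint A := .of_nonneg hA
  -- spectrum inclusion
  have hσ : ∀ μ ∈ spectrum ℝ A, μ ∈ Set.Icc m M := by
    intro μ hμ
    constructor
    · rw [← Algebra.algebraMap_eq_smul_one] at hA1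
      exact (algebraMap_le_iff_le_spectrum (a := A) hAsa).mp hA1 μ hμ
    · rw [← Algebra.algebraMap_eq_smul_one] at hA2
      exact (le_algebraMap_iff_spectrum_le (a := A) hAsa).mp hA2 μ hμ
  -- reformulated hypothesis
  have h' : ∀ t ∈ Set.Icc m M,
      cfc (fun x : ℝ => Real.sqrt (2*t*x - t^2)) A ≤ B ∧
        B ≤ cfc (fun x : ℝ => (1/(2*t))*x^2 + t/2) A := by
    intro t ht
    have ht0 : 0 < t := lt_of_lt_of_le hm ht.1
    obtain ⟨h1, h2⟩ := h t ht.1 ht.2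
    have hq : ∀ x ∈ spectrum ℝ A, 0 ≤ 2*t*x - t^2 := fun x hx =>
      Stmt9Aux.q_nonneg hm hMlt ht (hσ x hx)
    constructor
    · have key : cfc (fun x : ℝ => 2*t*x - t^2) A
          = (2 * t) • A - t ^ 2 • (1 : H →L[ℂ] H) := by
        rw [cfc_sub (fun x : ℝ => 2*t*x) (fun _ : ℝ => t^2) A]
        rw [show (fun x : ℝ => 2*t*x) = (fun x : ℝ => (2*t) * x) by ring_nf]
        rw [cfc_const_mul_id (2*t) A hAsa, cfc_const (t^2) A hAsa,
          Algebra.algebraMap_eq_smul_one]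
      have hsqrt : CFC.sqrt ((2 * t) • A - t ^ 2 • (1 : H →L[ℂ] H))
          = cfc (fun x : ℝ => Real.sqrt (2*t*x - t^2)) A := by
        apply CFC.sqrt_unique
        · rw [← cfc_mul (fun x : ℝ => Real.sqrt (2*t*x - t^2))
            (fun x : ℝ => Real.sqrt (2*t*x - t^2)) A (by fun_prop) (by fun_prop)]
          rw [cfc_congr (g := fun x : ℝ => 2*t*x - t^2)
            (fun x hx => Real.mul_self_sqrt (hq x hx))]
          exact key
        · exact cfc_nonneg (fun x hx => Real.sqrt_nonneg _)
      rwa [hsqrt] at h1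
    · have hup : (1 / (2 * t)) • A ^ 2 + (t / 2) • (1 : H →L[ℂ] H)
          = cfc (fun x : ℝ => (1/(2*t))*x^2 + t/2) A := by
        rw [cfc_add (a := A) (fun x : ℝ => (1/(2*t))*x^2) (fun _ : ℝ => t/2)]
        rw [cfc_const_mul (1/(2*t)) (fun x : ℝ => x^2) A, cfc_pow_id A 2 hAsa,
          cfc_const (t/2) A hAsa, Algebra.algebraMap_eq_smul_one]
      rwa [hup] at h2
  set K : ℝ := 3*(M-m)/(2*m) + (M-m)/m with hK_def
  have hK0 : 0 ≤ K := by
    have : 0 ≤ M - m := by linarith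
    positivity
  -- the key estimate for every x and every n ≥ 1
  have key : ∀ (x : H) (n : ℕ), 1 ≤ n →
      ‖(B - A) x‖^2 ≤ (K^2 * (↑n + 1) * ((M-m)/n)^2) * ‖x‖^2 := by
    intro x n hn
    have hn0 : (0:ℝ) < n := by exact_mod_cast hn
    set δ : ℝ := (M - m)/n with hδ_def
    have hδ0 : 0 ≤ δ := by
      have : 0 ≤ M - m := by linarith
      positivity
    have hδpos : 0 < δ := by
      apply div_pos _ hn0
      simp only [hM_def, hm_def]
      linarith
    rcases lt_or_ge 0 δ with hδpos | hδbad
    · set t : ℕ → ℝ := fun i => m + i * δ with ht_def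
      have hti : ∀ i : ℕ, i ≤ n → t i ∈ Set.Icc m M := by
        intro i hi
        constructor
        · simp only [ht_def]
          have : (0:ℝ) ≤ i * δ := by positivity
          linarith
        · simp only [ht_def]
          have hi' : (i:ℝ) ≤ n := by exact_mod_cast hi
          have : (i:ℝ) * δ ≤ n * δ := by
            apply mul_le_mul_of_nonneg_right hi' hδ0
          have hnδ : (n:ℝ) * δ = M - m := by
            rw [hδ_def]; field_simp
          linarith
      set ψ : ℕ → ℝ → ℝ := fun i v => Stmt9Aux.hat ((v - t i)/δ) with hψ_def
      have hψcont : ∀ i, Continuous (ψ i) := by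
        intro i
        apply Stmt9Aux.continuous_hat.comp
        fun_prop
      have hψ0 : ∀ i v, 0 ≤ ψ i v := fun i v => Stmt9Aux.hat_nonneg _
      -- sum of the partition equals one on the spectrum
      have hone : ∑ i ∈ Finset.range (n+1), cfc (ψ i) A = 1 := by
        rw [← cfc_sum (fun i => ψ i) A (Finset.range (n+1))
          (fun i _ => (hψcont i).continuousOn)]
        have hfun : (∑ i ∈ Finset.range (n+1), ψ i)
            = fun v => ∑ i ∈ Finset.range (n+1), ψ i v := by
          ext v; simp
        rw [hfun]
        have : (spectrum ℝ A).EqOn (fun v => ∑ i ∈ Finset.range (n+1), ψ i v)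
            (fun _ => (1:ℝ)) := by
          intro v hv
          have hvmM := hσ v hv
          have hu : (v - m)/δ ∈ Set.Icc (0:ℝ) n := by
            constructor
            · apply div_nonneg _ hδ0
              linarith [hvmM.1]
            · rw [div_le_iff₀ hδpos]
              have hnδ : (n:ℝ) * δ = M - m := by rw [hδ_def]; field_simp
              linarith [hvmM.2]
          have hsum := Stmt9Aux.hat_sum n ((v - m)/δ) hu
          show ∑ i ∈ Finset.range (n+1), ψ i v = 1
          rw [← hsum]
          apply Finset.sum_congr rfl
          intro i _
          show Stmt9Aux.hat ((v - t i)/δ) = Stmt9Aux.hat ((v - m)/δ - i)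
          congr 1
          show (v - (m + i*δ))/δ = (v - m)/δ - i
          field_simp
          ring
        rw [cfc_congr this, cfc_const 1 A hAsa, map_one]
      -- decompose x
      have hdecomp : (B - A) x = ∑ i ∈ Finset.range (n+1), (B - A) (cfc (ψ i) A x) := by
        rw [← map_sum]
        congr 1
        have : ∑ i ∈ Finset.range (n+1), cfc (ψ i) A x
            = (∑ i ∈ Finset.range (n+1), cfc (ψ i) A) x := by
          rw [ContinuousLinearMap.sum_apply]
        rw [this, hone, ContinuousLinearMap.one_apply]
      set η : ℕ → ℝ → ℝ := fun i v => (v - t i) * ψ i v with hη_def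
      have hηcont : ∀ i, Continuous (η i) := by
        intro i
        exact (continuous_id.sub continuous_const).mul (hψcont i)
      set a : ℕ → ℝ := fun i => ‖cfc (η i) A x‖ with ha_def
      set s : ℕ → ℝ := fun i => RCLike.re ⟪cfc (ψ i) A x, x⟫_ℂ with hs_def
      have hs0 : ∀ i, 0 ≤ s i := by
        intro i
        exact Stmt9Aux.inner_nonneg_of_nonneg (cfc_nonneg (fun v _ => hψ0 i v)) x
      -- each term bound
      have hterm : ∀ i ∈ Finset.range (n+1), ‖(B - A) (cfc (ψ i) A x)‖ ≤ K * a i := by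
        intro i hi
        have hi' : i ≤ n := by
          have := Finset.mem_range.mp hi
          omega
        have hmaster := Stmt9Aux.master A B hAsa hm hMlt hmM hσ (hti i hi')
          (h' (t i) (hti i hi')).1 (h' (t i) (hti i hi')).2 (cfc (ψ i) A x)
        have heq : (A - t i • 1) (cfc (ψ i) A x) = cfc (η i) A x := by
          rw [← ContinuousLinearMap.mul_apply, ← Stmt9Aux.cfc_sub_const A hAsa (t i),
            ← cfc_mul (fun v : ℝ => v - t i) (ψ i) A (by fun_prop) (hψcont i).continuousOn]
        rw [heq] at hmaster
        exact hmaster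
      -- bound on a i squared
      have hai : ∀ i, (a i)^2 ≤ δ^2 * s i := by
        intro i
        have hηsa : IsSelfAdjoint (cfc (η i) A) := cfc_predicate _ A
        have e1 : (a i)^2 = RCLike.re ⟪(cfc (η i) A * cfc (η i) A) x, x⟫_ℂ := by
          rw [Stmt9Aux.normsq_eq hηsa]
        have e2 : cfc (η i) A * cfc (η i) A = cfc (fun v => η i v * η i v) A := by
          rw [cfc_mul (η i) (η i) A (hηcont i).continuousOn (hηcont i).continuousOn]
        have e3 : cfc (fun v => η i v * η i v) A ≤ cfc (fun v => δ^2 * ψ i v) A := by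
          apply cfc_mono (fun v hv => ?_) ((hηcont i).mul (hηcont i)).continuousOn
            (continuous_const.mul (hψcont i)).continuousOn
          have : η i v = δ * ((v - t i)/δ) * Stmt9Aux.hat ((v - t i)/δ) := by
            simp only [hη_def, hψ_def]
            field_simp
          show η i v * η i v ≤ δ^2 * ψ i v
          rw [this]
          exact Stmt9Aux.eta_sq hδpos
        have e4 : cfc (fun v => δ^2 * ψ i v) A = δ^2 • cfc (ψ i) A := by
          rw [cfc_const_mul (δ^2) (ψ i) A (hψcont i).continuousOn]
        calc (a i)^2 = RCLike.re ⟪(cfc (η i) A * cfc (η i) A) x, x⟫_ℂ := e1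
          _ ≤ RCLike.re ⟪(δ^2 • cfc (ψ i) A) x, x⟫_ℂ := by
              rw [e2] at *
              rw [← e4]
              exact Stmt9Aux.inner_le_of_le e3 x
          _ = δ^2 * s i := Stmt9Aux.re_inner_smul _ _ _
      -- sum of s i
      have hssum : ∑ i ∈ Finset.range (n+1), s i = ‖x‖^2 := by
        simp only [hs_def]
        rw [← map_sum, ← sum_inner]
        have : ∑ i ∈ Finset.range (n+1), cfc (ψ i) A x
            = (∑ i ∈ Finset.range (n+1), cfc (ψ i) A) x := by
          rw [ContinuousLinearMap.sum_apply]
        rw [this, hone, ContinuousLinearMap.one_apply]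
        exact inner_self_eq_norm_sq x
      -- Cauchy-Schwarz on the finite sum
      have hcs : (∑ i ∈ Finset.range (n+1), a i)^2
          ≤ (↑n + 1) * ∑ i ∈ Finset.range (n+1), (a i)^2 := by
        have := sq_sum_le_card_mul_sum_sq (s := Finset.range (n+1)) (f := a)
        simpa using this
      have hsum2 : ∑ i ∈ Finset.range (n+1), (a i)^2 ≤ δ^2 * ‖x‖^2 := by
        calc ∑ i ∈ Finset.range (n+1), (a i)^2
            ≤ ∑ i ∈ Finset.range (n+1), δ^2 * s i := Finset.sum_le_sum (fun i _ => hai i)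
          _ = δ^2 * ∑ i ∈ Finset.range (n+1), s i := by rw [Finset.mul_sum]
          _ = δ^2 * ‖x‖^2 := by rw [hssum]
      -- put everything together
      have hnorm1 : ‖(B - A) x‖ ≤ K * ∑ i ∈ Finset.range (n+1), a i := by
        rw [hdecomp]
        calc ‖∑ i ∈ Finset.range (n+1), (B - A) (cfc (ψ i) A x)‖
            ≤ ∑ i ∈ Finset.range (n+1), ‖(B - A) (cfc (ψ i) A x)‖ := norm_sum_le _ _
          _ ≤ ∑ i ∈ Finset.range (n+1), K * a i := Finset.sum_le_sum hterm
          _ = K * ∑ i ∈ Finset.range (n+1), a i := by rw [Finset.mul_sum]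
      have ha0 : 0 ≤ ∑ i ∈ Finset.range (n+1), a i :=
        Finset.sum_nonneg (fun i _ => norm_nonneg _)
      calc ‖(B - A) x‖^2 ≤ (K * ∑ i ∈ Finset.range (n+1), a i)^2 := by
            apply pow_le_pow_left₀ (norm_nonneg _) hnorm1
        _ = K^2 * (∑ i ∈ Finset.range (n+1), a i)^2 := by ring
        _ ≤ K^2 * ((↑n + 1) * ∑ i ∈ Finset.range (n+1), (a i)^2) := by
            apply mul_le_mul_of_nonneg_left hcs (by positivity)
        _ ≤ K^2 * ((↑n + 1) * (δ^2 * ‖x‖^2)) := by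
            apply mul_le_mul_of_nonneg_left _ (by positivity)
            apply mul_le_mul_of_nonneg_left hsum2 (by positivity)
        _ = (K^2 * (↑n + 1) * δ^2) * ‖x‖^2 := by ring
    · exact absurd hδpos (not_lt.mpr hδbad)
  -- conclude B = A
  have hzero : ∀ x : H, (B - A) x = 0 := by
    intro x
    set q : ℝ := ‖(B - A) x‖^2 with hq_def
    set c0 : ℝ := 2 * K^2 * (M-m)^2 * ‖x‖^2 with hc0_def
    have hc00 : 0 ≤ c0 := by positivity
    have hq0 : ∀ n : ℕ, 1 ≤ n → q ≤ c0 / n := by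
      intro n hn
      have hn0 : (0:ℝ) < n := by exact_mod_cast hn
      have h1 := key x n hn
      have h2 : K^2 * (↑n + 1) * ((M-m)/n)^2 * ‖x‖^2 ≤ c0 / n := by
        have hstep : ((n:ℝ) + 1)/(n:ℝ)^2 ≤ 2/(n:ℝ) := by
          rw [div_le_div_iff₀ (by positivity) hn0]
          have hn1' : (1:ℝ) ≤ n := by exact_mod_cast hn
          nlinarith [hn1']
        have e1 : K^2 * (↑n + 1) * ((M-m)/n)^2 * ‖x‖^2
            = (K^2 * (M-m)^2 * ‖x‖^2) * (((n:ℝ) + 1)/(n:ℝ)^2) := by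
          field_simp
        have e2 : c0 / n = (K^2 * (M-m)^2 * ‖x‖^2) * (2/(n:ℝ)) := by
          simp only [hc0_def]
          field_simp
        rw [e1, e2]
        exact mul_le_mul_of_nonneg_left hstep (by positivity)
      calc q ≤ K^2 * (↑n + 1) * ((M-m)/n)^2 * ‖x‖^2 := h1
        _ ≤ c0 / n := h2
    have hqle : q ≤ 0 := by
      by_contra hpos
      push_neg at hpos
      obtain ⟨n, hn⟩ := exists_nat_gt (c0 / q)
      have hn1 : 1 ≤ n := by
        by_contra hn1
        push_neg at hn1
        interval_cases n
        simp only [Nat.cast_zero] at hn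
        exact absurd hn (not_lt.mpr (div_nonneg hc00 (le_of_lt hpos)))
      have hn0 : (0:ℝ) < n := by exact_mod_cast hn1
      have hlt : c0 / n < q := by
        rw [div_lt_iff₀ hn0]
        have := (div_lt_iff₀ hpos).mp hn
        linarith
      exact absurd (hq0 n hn1) (not_le.mpr hlt)
    have hqz : q = 0 := le_antisymm hqle (by positivity)
    have : ‖(B - A) x‖ = 0 := by
      have := pow_eq_zero_iff (n := 2) (by norm_num) |>.mp hqz
      exact this
    exact norm_eq_zero.mp this
  have : B - A = 0 := by
    ext x
    simp [hzero x]
  have hBA : B = A := by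
    rwa [sub_eq_zero] at this
  exact hBA.symm
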